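/- Let C = (C_1,...,C_n) and C' = (C'_1,...,C'_n) be normalized spectrahedral representations (each C_i, C'_i ⪰ 0 and Σ_i C_i = Σ_i C'_i = Id). Then the Hausdorff distance between the cones K_C and K_{C'} (intersected with the unit ball) is at most n^{3/2} · max_i ‖C_i - C'_i‖. -/

import Mathlib

open Matrix
open scoped RealInnerProductSpace

/-- The operator norm of a real matrix, acting on Euclidean space. -/
noncomputable def matOpNorm {k : ℕ} (A : Matrix (Fin k) (Fin k) ℝ) : ℝ :=
  ‖Matrix.toEuclideanCLM (𝕜 := ℝ) A‖

lemma quadForm_sum_smul {n k : ℕ} (D : Fin n → Matrix (Fin k) (Fin k) ℝ) (z : Fin n → ℝ)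
    (u : Fin k → ℝ) : u ⬝ᵥ (∑ i, z i • D i) *ᵥ u = ∑ i, z i * (u ⬝ᵥ (D i) *ᵥ u) := by
  simp only [dotProduct, mulVec, Matrix.sum_apply, Matrix.smul_apply, smul_eq_mul,
    Finset.mul_sum, Finset.sum_mul]
  rw [Finset.sum_comm (γ := Fin n)]
  refine Finset.sum_congr rfl fun i _ => ?_
  rw [Finset.sum_comm (γ := Fin n)]
  exact Finset.sum_congr rfl fun a _ => Finset.sum_congr rfl fun b _ => by ring

lemma abs_quadForm_le {k : ℕ} (A : Matrix (Fin k) (Fin k) ℝ) (u : Fin k → ℝ) :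
    |u ⬝ᵥ A *ᵥ u| ≤ matOpNorm A * (u ⬝ᵥ u) := by
  set u' : EuclideanSpace ℝ (Fin k) := (WithLp.equiv 2 _).symm u with hu'
  have h1 : u ⬝ᵥ A *ᵥ u = ⟪u', Matrix.toEuclideanCLM (𝕜 := ℝ) A u'⟫ := by
    rw [hu', WithLp.equiv_symm_apply, Matrix.toEuclideanCLM_toLp]
    simp [PiLp.inner_apply, dotProduct, mulVec, Matrix.toLin'_apply, RCLike.inner_apply, mul_comm]
  have h2 : u ⬝ᵥ u = ‖u'‖ * ‖u'‖ := by
    rw [← real_inner_self_eq_norm_mul_norm]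
    simp [PiLp.inner_apply, dotProduct, RCLike.inner_apply, hu', ← sq, EuclideanSpace.norm_sq_eq]
  rw [h1, h2]
  calc |⟪u', Matrix.toEuclideanCLM (𝕜 := ℝ) A u'⟫|
      ≤ ‖u'‖ * ‖Matrix.toEuclideanCLM (𝕜 := ℝ) A u'‖ := abs_real_inner_le_norm _ _
    _ ≤ ‖u'‖ * (matOpNorm A * ‖u'‖) := by
        gcongr; exact ContinuousLinearMap.le_opNorm _ _
    _ = matOpNorm A * (‖u'‖ * ‖u'‖) := by ring

lemma matOpNorm_nonneg {k : ℕ} (A : Matrix (Fin k) (Fin k) ℝ) : 0 ≤ matOpNorm A :=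
  norm_nonneg _

lemma matOpNorm_sub_symm {k : ℕ} (A B : Matrix (Fin k) (Fin k) ℝ) :
    matOpNorm (A - B) = matOpNorm (B - A) := by
  unfold matOpNorm
  rw [← neg_sub B A, map_neg, norm_neg]

lemma isHermitian_sum_smul {n k : ℕ} (D : Fin n → Matrix (Fin k) (Fin k) ℝ)
    (h : ∀ i, (D i).IsHermitian) (z : Fin n → ℝ) : (∑ i, z i • D i).IsHermitian := by
  rw [Matrix.IsHermitian, Matrix.conjTranspose_sum]
  exact Finset.sum_congr rfl fun i _ => by
    rw [Matrix.conjTranspose_smul, star_trivial, (h i).eq]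

lemma posSemidef_smul {k : ℕ} {M : Matrix (Fin k) (Fin k) ℝ} (hM : M.PosSemidef) {a : ℝ}
    (ha : 0 ≤ a) : (a • M).PosSemidef := by
  refine Matrix.PosSemidef.of_dotProduct_mulVec_nonneg ?_ fun u => ?_
  · rw [Matrix.IsHermitian, Matrix.conjTranspose_smul, star_trivial, hM.1.eq]
  · rw [Matrix.smul_mulVec, dotProduct_smul, smul_eq_mul]
    exact mul_nonneg ha (hM.dotProduct_mulVec_nonneg u)

lemma infDist_le_aux {n k : ℕ} (hn : 0 < n) (C C' : Fin n → Matrix (Fin k) (Fin k) ℝ)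
    (hC' : ∀ i, (C' i).PosSemidef) (hC'sum : (∑ i, C' i) = (1 : Matrix (Fin k) (Fin k) ℝ))
    {ε : ℝ} (hε0 : 0 ≤ ε) (hε : ∀ i, matOpNorm (C i - C' i) ≤ ε)
    (x : EuclideanSpace ℝ (Fin n)) (hx1 : (∑ i, x i • C i).PosSemidef) (hx2 : ‖x‖ ≤ 1) :
    Metric.infDist x {z : EuclideanSpace ℝ (Fin n) | (∑ i, z i • C' i).PosSemidef ∧ ‖z‖ ≤ 1}
      ≤ (n : ℝ) * ε := by
  classical
  set K' : Set (EuclideanSpace ℝ (Fin n)) :=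
    {z | (∑ i, z i • C' i).PosSemidef} with hK'def
  -- sum of absolute values bound
  have hxsum : ∑ i, |x i| ≤ Real.sqrt n := by
    have h1 : (∑ i, |x i|) ^ 2 ≤ (n : ℝ) * ∑ i, |x i| ^ 2 := by
      simpa using sq_sum_le_card_mul_sum_sq (s := (Finset.univ : Finset (Fin n)))
        (f := fun i => |x i|)
    have h2 : ∑ i, |x i| ^ 2 = ‖x‖ ^ 2 := by
      rw [EuclideanSpace.norm_eq, Real.sq_sqrt (Finset.sum_nonneg fun i _ => sq_nonneg _)]
      exact Finset.sum_congr rfl fun i _ => by rw [Real.norm_eq_abs]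
    rw [Real.le_sqrt (Finset.sum_nonneg fun i _ => abs_nonneg _) (Nat.cast_nonneg n)]
    have h3 : ‖x‖ ^ 2 ≤ 1 := by nlinarith [norm_nonneg x]
    nlinarith [Nat.cast_nonneg (α := ℝ) n]
  set t : ℝ := Real.sqrt n * ε with htdef
  have ht0 : 0 ≤ t := mul_nonneg (Real.sqrt_nonneg _) hε0
  set c : EuclideanSpace ℝ (Fin n) := (WithLp.equiv 2 (Fin n → ℝ)).symm (fun _ => t) with hcdef
  set y : EuclideanSpace ℝ (Fin n) := x + c with hydef
  have hyi : ∀ i, y i = x i + t := fun i => rfl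
  -- key quadratic-form inequality
  have key : ∀ u : Fin k → ℝ, 0 ≤ ∑ i, (x i + t) * (u ⬝ᵥ (C' i) *ᵥ u) := by
    intro u
    set U : ℝ := u ⬝ᵥ u with hUdef
    have hU0 : 0 ≤ U := Finset.sum_nonneg fun i _ => mul_self_nonneg _
    have h1 : 0 ≤ ∑ i, x i * (u ⬝ᵥ (C i) *ᵥ u) := by
      rw [← quadForm_sum_smul]
      simpa using hx1.dotProduct_mulVec_nonneg u
    have h2 : ∀ i, |x i * ((u ⬝ᵥ (C' i) *ᵥ u) - (u ⬝ᵥ (C i) *ᵥ u))| ≤ |x i| * (ε * U) := by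
      intro i
      rw [abs_mul]
      refine mul_le_mul_of_nonneg_left ?_ (abs_nonneg _)
      have hsub : (u ⬝ᵥ (C' i) *ᵥ u) - (u ⬝ᵥ (C i) *ᵥ u) = u ⬝ᵥ (C' i - C i) *ᵥ u := by
        rw [Matrix.sub_mulVec, dotProduct_sub]
      rw [hsub]
      calc |u ⬝ᵥ (C' i - C i) *ᵥ u| ≤ matOpNorm (C' i - C i) * U := abs_quadForm_le _ u
        _ ≤ ε * U := by
            refine mul_le_mul_of_nonneg_right ?_ hU0
            rw [matOpNorm_sub_symm]; exact hε i
    have h5 : |∑ i, x i * ((u ⬝ᵥ (C' i) *ᵥ u) - (u ⬝ᵥ (C i) *ᵥ u))| ≤ Real.sqrt n * (ε * U) := by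
      calc |∑ i, x i * ((u ⬝ᵥ (C' i) *ᵥ u) - (u ⬝ᵥ (C i) *ᵥ u))|
          ≤ ∑ i, |x i * ((u ⬝ᵥ (C' i) *ᵥ u) - (u ⬝ᵥ (C i) *ᵥ u))| :=
            Finset.abs_sum_le_sum_abs _ _
        _ ≤ ∑ i, |x i| * (ε * U) := Finset.sum_le_sum fun i _ => h2 i
        _ = (∑ i, |x i|) * (ε * U) := by rw [Finset.sum_mul]
        _ ≤ Real.sqrt n * (ε * U) :=
            mul_le_mul_of_nonneg_right hxsum (mul_nonneg hε0 hU0)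
    have h4 : ∑ i, (u ⬝ᵥ (C' i) *ᵥ u) = U := by
      have := quadForm_sum_smul C' (fun _ => (1 : ℝ)) u
      simp only [one_smul, one_mul] at this
      rw [← this, hC'sum, Matrix.one_mulVec]
    have expand : ∑ i, (x i + t) * (u ⬝ᵥ (C' i) *ᵥ u)
        = (∑ i, x i * (u ⬝ᵥ (C i) *ᵥ u))
          + (∑ i, x i * ((u ⬝ᵥ (C' i) *ᵥ u) - (u ⬝ᵥ (C i) *ᵥ u))) + t * U := by
      rw [← h4, Finset.mul_sum, ← Finset.sum_add_distrib, ← Finset.sum_add_distrib]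
      exact Finset.sum_congr rfl fun i _ => by ring
    rw [expand]
    have h6 := (abs_le.mp h5).1
    have ht : t * U = Real.sqrt n * (ε * U) := by rw [htdef]; ring
    linarith
  have hyK : y ∈ K' := by
    refine Matrix.PosSemidef.of_dotProduct_mulVec_nonneg (isHermitian_sum_smul C' (fun i => (hC' i).1) _) fun u => ?_
    rw [star_trivial, quadForm_sum_smul]
    exact key u
  have h0K : (0 : EuclideanSpace ℝ (Fin n)) ∈ K' := by
    show (∑ i, (0 : EuclideanSpace ℝ (Fin n)) i • C' i).PosSemidef
    simp only [show ∀ i, (0 : EuclideanSpace ℝ (Fin n)) i = 0 from fun _ => rfl, zero_smul,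
      Finset.sum_const, smul_zero]
    exact Matrix.PosSemidef.zero
  have hconv : Convex ℝ K' := by
    intro z hz w hw a b ha hb hab
    show (∑ i, (a • z + b • w) i • C' i).PosSemidef
    have happ : ∀ i, (a • z + b • w) i = a * z i + b * w i := fun i => rfl
    have heq : (∑ i, (a • z + b • w) i • C' i)
        = a • (∑ i, z i • C' i) + b • (∑ i, w i • C' i) := by
      rw [Finset.smul_sum, Finset.smul_sum, ← Finset.sum_add_distrib]
      exact Finset.sum_congr rfl fun i _ => by
        rw [happ i, add_smul, smul_smul, smul_smul]
    rw [heq]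
    exact (posSemidef_smul hz ha).add (posSemidef_smul hw hb)
  have hclosed : IsClosed K' := by
    have hKeq : K' = ⋂ u : Fin k → ℝ,
        {z : EuclideanSpace ℝ (Fin n) | 0 ≤ ∑ i, z i * (u ⬝ᵥ (C' i) *ᵥ u)} := by
      ext z
      simp only [hK'def, Set.mem_setOf_eq, Set.mem_iInter]
      constructor
      · intro hz u
        rw [← quadForm_sum_smul]
        simpa using hz.dotProduct_mulVec_nonneg u
      · intro h
        refine Matrix.PosSemidef.of_dotProduct_mulVec_nonneg (isHermitian_sum_smul C' (fun i => (hC' i).1) _) fun u => ?_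
        rw [star_trivial, quadForm_sum_smul]
        exact h u
    rw [hKeq]
    refine isClosed_iInter fun u => isClosed_le continuous_const ?_
    exact continuous_finset_sum _ fun i _ =>
      ((EuclideanSpace.proj (𝕜 := ℝ) i).continuous.mul continuous_const)
  obtain ⟨v, hvK, hvmin⟩ :=
    exists_norm_eq_iInf_of_complete_convex ⟨0, h0K⟩ hclosed.isComplete hconv x
  have hvchar := (norm_eq_iInf_iff_real_inner_le_zero hconv hvK).1 hvmin
  have h2v : ((2 : ℝ) • v) ∈ K' := by
    show (∑ i, ((2 : ℝ) • v) i • C' i).PosSemidef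
    have heq : (∑ i, ((2 : ℝ) • v) i • C' i) = (2 : ℝ) • (∑ i, v i • C' i) := by
      rw [Finset.smul_sum]
      exact Finset.sum_congr rfl fun i _ => by
        show ((2 : ℝ) * v i) • C' i = (2 : ℝ) • (v i • C' i)
        rw [smul_smul]
    rw [heq]
    exact posSemidef_smul hvK (by norm_num)
  have e1 := hvchar 0 h0K
  have e2 := hvchar _ h2v
  have hinner : ⟪x - v, v⟫ = 0 := by
    have h2 : (2 : ℝ) • v - v = v := by rw [two_smul]; abel
    rw [h2] at e2
    rw [zero_sub, inner_neg_right] at e1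
    linarith
  have hvnorm : ‖v‖ ≤ ‖x‖ := by
    have hle := real_inner_le_norm x v
    have hxv : ⟪x, v⟫ = ‖v‖ * ‖v‖ := by
      have h := hinner
      rw [inner_sub_left] at h
      rw [← real_inner_self_eq_norm_mul_norm]
      linarith
    rcases eq_or_lt_of_le (norm_nonneg v) with h0 | h0
    · rw [← h0]; exact norm_nonneg x
    · have : ‖v‖ * ‖v‖ ≤ ‖x‖ * ‖v‖ := by rw [← hxv]; exact hle
      exact le_of_mul_le_mul_right this h0
  have hdist : ‖x - v‖ ≤ ‖x - y‖ := by
    rw [hvmin]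
    exact ciInf_le ⟨0, Set.forall_mem_range.2 fun _ => norm_nonneg _⟩ (⟨y, hyK⟩ : K')
  have hxy : ‖x - y‖ = Real.sqrt n * t := by
    have hsub : x - y = -c := by rw [hydef]; abel
    rw [hsub, norm_neg]
    rw [EuclideanSpace.norm_eq]
    have hci : ∀ i, c i = t := fun i => rfl
    simp only [hci, Real.norm_eq_abs, sq_abs, Finset.sum_const, Finset.card_univ,
      Fintype.card_fin, nsmul_eq_mul]
    rw [Real.sqrt_mul (Nat.cast_nonneg n), Real.sqrt_sq ht0]
  have hfin : Metric.infDist x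
      {z : EuclideanSpace ℝ (Fin n) | (∑ i, z i • C' i).PosSemidef ∧ ‖z‖ ≤ 1}
      ≤ dist x v :=
    Metric.infDist_le_dist_of_mem ⟨hvK, hvnorm.trans hx2⟩
  rw [dist_eq_norm] at hfin
  have : Real.sqrt n * t = (n : ℝ) * ε := by
    rw [htdef, ← mul_assoc, Real.mul_self_sqrt (Nat.cast_nonneg n)]
  calc Metric.infDist x _ ≤ ‖x - v‖ := hfin
    _ ≤ ‖x - y‖ := hdist
    _ = (n : ℝ) * ε := by rw [hxy, this]

theorem hausdorffDist_le_of_normalized_representations (n k : ℕ) (hn : 0 < n)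
    (C C' : Fin n → Matrix (Fin k) (Fin k) ℝ)
    (hC : ∀ i, (C i).PosSemidef) (hC' : ∀ i, (C' i).PosSemidef)
    (hCsum : (∑ i, C i) = (1 : Matrix (Fin k) (Fin k) ℝ))
    (hC'sum : (∑ i, C' i) = (1 : Matrix (Fin k) (Fin k) ℝ)) :
    Metric.hausdorffDist
        {x : EuclideanSpace ℝ (Fin n) | (∑ i, x i • C i).PosSemidef ∧ ‖x‖ ≤ 1}
        {x : EuclideanSpace ℝ (Fin n) | (∑ i, x i • C' i).PosSemidef ∧ ‖x‖ ≤ 1} ≤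
      (n : ℝ) ^ ((3 : ℝ) / 2) *
        Finset.univ.sup' (@Finset.univ_nonempty (Fin n) _ ⟨⟨0, hn⟩⟩)
          (fun i => matOpNorm (C i - C' i)) := by
  classical
  set ε : ℝ := Finset.univ.sup' (@Finset.univ_nonempty (Fin n) _ ⟨⟨0, hn⟩⟩)
    (fun i => matOpNorm (C i - C' i)) with hεdef
  have hεle : ∀ i, matOpNorm (C i - C' i) ≤ ε := fun i => by
    rw [hεdef]
    exact Finset.le_sup' (fun j => matOpNorm (C j - C' j)) (Finset.mem_univ i)
  have hε0 : 0 ≤ ε :=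
    le_trans (matOpNorm_nonneg (C ⟨0, hn⟩ - C' ⟨0, hn⟩)) (hεle ⟨0, hn⟩)
  have hεle' : ∀ i, matOpNorm (C' i - C i) ≤ ε := fun i => by
    rw [matOpNorm_sub_symm]; exact hεle i
  have hmono : (n : ℝ) * ε ≤ (n : ℝ) ^ ((3 : ℝ) / 2) * ε := by
    refine mul_le_mul_of_nonneg_right ?_ hε0
    calc (n : ℝ) = (n : ℝ) ^ (1 : ℝ) := (Real.rpow_one _).symm
      _ ≤ (n : ℝ) ^ ((3 : ℝ) / 2) :=
        Real.rpow_le_rpow_of_exponent_le (by exact_mod_cast hn) (by norm_num)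
  refine Metric.hausdorffDist_le_of_infDist
    (mul_nonneg (Real.rpow_nonneg (Nat.cast_nonneg n) _) hε0) ?_ ?_
  · rintro x ⟨hx1, hx2⟩
    exact le_trans (infDist_le_aux hn C C' hC' hC'sum hε0 hεle x hx1 hx2) hmono
  · rintro x ⟨hx1, hx2⟩
    exact le_trans (infDist_le_aux hn C' C hC hCsum hε0 hεle' x hx1 hx2) hmono
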